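/- Let L be a lattice and let Φ be a congruence of the lattice M̂(L) of Boolean triples. Let Θ be the congruence of L defined by Θ(x, y) iff Φ((x,x,x),(y,y,y)). Then Φ = Θ̂; that is, Φ((x₀,y₀,z₀),(x₁,y₁,z₁)) holds if and only if Θ(x₀,x₁), Θ(y₀,y₁) and Θ(z₀,z₁) all hold. Consequently, every congruence of M̂(L) is of the form Θ̂ for a unique congruence Θ of L. -/
import Mathlib


/-- A triple `(x, y, z)` in a lattice is *Boolean* if
`x = (x ⊔ y) ⊓ (x ⊔ z)`, `y = (y ⊔ x) ⊓ (y ⊔ z)`, `z = (z ⊔ x) ⊓ (z ⊔ y)`. -/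
def IsBoolean {L : Type*} [Lattice L] (t : L × L × L) : Prop :=
  t.1 = (t.1 ⊔ t.2.1) ⊓ (t.1 ⊔ t.2.2) ∧
  t.2.1 = (t.2.1 ⊔ t.1) ⊓ (t.2.1 ⊔ t.2.2) ∧
  t.2.2 = (t.2.2 ⊔ t.1) ⊓ (t.2.2 ⊔ t.2.1)

/-- The Boolean closure of a triple. -/
def bClosure {L : Type*} [Lattice L] (t : L × L × L) : L × L × L :=
  ((t.1 ⊔ t.2.1) ⊓ (t.1 ⊔ t.2.2),
   (t.2.1 ⊔ t.1) ⊓ (t.2.1 ⊔ t.2.2),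
   (t.2.2 ⊔ t.1) ⊓ (t.2.2 ⊔ t.2.1))

variable {L : Type*} [Lattice L]

theorem isBoolean_of_rep (u v w : L) :
    IsBoolean ((u ⊓ v, u ⊓ w, v ⊓ w) : L × L × L) := by
  refine ⟨le_antisymm (le_inf le_sup_left le_sup_left) ?_,
          le_antisymm (le_inf le_sup_left le_sup_left) ?_,
          le_antisymm (le_inf le_sup_left le_sup_left) ?_⟩
  · exact inf_le_inf (sup_le inf_le_left inf_le_left) (sup_le inf_le_right inf_le_left)
  · exact inf_le_inf (sup_le inf_le_left inf_le_left) (sup_le inf_le_right inf_le_right)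
  · exact inf_le_inf (sup_le inf_le_left inf_le_right) (sup_le inf_le_right inf_le_right)

theorem isBoolean_iff_rep (t : L × L × L) :
    IsBoolean t ↔ ∃ u v w : L, t.1 = u ⊓ v ∧ t.2.1 = u ⊓ w ∧ t.2.2 = v ⊓ w := by
  constructor
  · rintro ⟨h1, h2, h3⟩
    refine ⟨t.1 ⊔ t.2.1, t.1 ⊔ t.2.2, t.2.1 ⊔ t.2.2, h1, ?_, ?_⟩
    · conv_lhs => rw [h2]
      rw [sup_comm t.2.1 t.1]
    · conv_lhs => rw [h3]
      rw [sup_comm t.2.2 t.1, sup_comm t.2.2 t.2.1]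
  · rintro ⟨u, v, w, h1, h2, h3⟩
    obtain ⟨a, b, c⟩ := t
    simp only at h1 h2 h3
    subst h1 h2 h3
    exact isBoolean_of_rep u v w

theorem bClosure_isBoolean (t : L × L × L) : IsBoolean (bClosure t) := by
  rw [isBoolean_iff_rep]
  refine ⟨t.1 ⊔ t.2.1, t.1 ⊔ t.2.2, t.2.1 ⊔ t.2.2, rfl, ?_, ?_⟩
  · show (t.2.1 ⊔ t.1) ⊓ (t.2.1 ⊔ t.2.2) = _
    rw [sup_comm t.2.1 t.1]
  · show (t.2.2 ⊔ t.1) ⊓ (t.2.2 ⊔ t.2.1) = _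
    rw [sup_comm t.2.2 t.1, sup_comm t.2.2 t.2.1]

theorem IsBoolean.inf {a b : L × L × L} (ha : IsBoolean a) (hb : IsBoolean b) :
    IsBoolean (a ⊓ b) := by
  rw [isBoolean_iff_rep] at ha hb ⊢
  obtain ⟨u, v, w, h1, h2, h3⟩ := ha
  obtain ⟨u', v', w', h1', h2', h3'⟩ := hb
  refine ⟨u ⊓ u', v ⊓ v', w ⊓ w', ?_, ?_, ?_⟩
  · show a.1 ⊓ b.1 = _
    rw [h1, h1', inf_inf_inf_comm]
  · show a.2.1 ⊓ b.2.1 = _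
    rw [h2, h2', inf_inf_inf_comm]
  · show a.2.2 ⊓ b.2.2 = _
    rw [h3, h3', inf_inf_inf_comm]

theorem le_bClosure (t : L × L × L) : t ≤ bClosure t :=
  ⟨le_inf le_sup_left le_sup_left, le_inf le_sup_left le_sup_left,
   le_inf le_sup_left le_sup_left⟩

theorem bClosure_le {t c : L × L × L} (hc : IsBoolean c) (h : t ≤ c) :
    bClosure t ≤ c := by
  obtain ⟨h1, h2, h3⟩ := h
  refine ⟨?_, ?_, ?_⟩
  · rw [hc.1]; exact inf_le_inf (sup_le_sup h1 h2) (sup_le_sup h1 h3)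
  · rw [hc.2.1]; exact inf_le_inf (sup_le_sup h2 h1) (sup_le_sup h2 h3)
  · rw [hc.2.2]; exact inf_le_inf (sup_le_sup h3 h1) (sup_le_sup h3 h2)

/-- The lattice `M̂(L)` of Boolean triples of `L`, ordered componentwise. -/
def BoolTriple (L : Type*) [Lattice L] := {t : L × L × L // IsBoolean t}

instance : PartialOrder (BoolTriple L) := Subtype.partialOrder _

instance : Lattice (BoolTriple L) where
  sup a b := ⟨bClosure (a.1 ⊔ b.1), bClosure_isBoolean _⟩
  le_sup_left a b := show a.1 ≤ bClosure (a.1 ⊔ b.1) from le_trans le_sup_left (le_bClosure _)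
  le_sup_right a b := show b.1 ≤ bClosure (a.1 ⊔ b.1) from le_trans le_sup_right (le_bClosure _)
  sup_le a b c hac hbc := show bClosure (a.1 ⊔ b.1) ≤ c.1 from bClosure_le c.2 (sup_le hac hbc)
  inf a b := ⟨a.1 ⊓ b.1, a.2.inf b.2⟩
  inf_le_left a b := show a.1 ⊓ b.1 ≤ a.1 from inf_le_left
  inf_le_right a b := show a.1 ⊓ b.1 ≤ b.1 from inf_le_right
  le_inf a b c hab hac := show a.1 ≤ b.1 ⊓ c.1 from le_inf hab hac

/-- A *congruence* of a lattice: an equivalence relation compatible with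
joins and meets. -/
def IsLatticeCongruence {α : Type*} [Lattice α] (Θ : α → α → Prop) : Prop :=
  Equivalence Θ ∧
    ∀ a b c d : α, Θ a b → Θ c d → Θ (a ⊔ c) (b ⊔ d) ∧ Θ (a ⊓ c) (b ⊓ d)

theorem isBoolean_diag {L : Type*} [Lattice L] (x : L) :
    IsBoolean ((x, x, x) : L × L × L) := ⟨by simp, by simp, by simp⟩

/-- The diagonal element `(x, x, x)` of `M̂(L)`. -/
def diag {L : Type*} [Lattice L] (x : L) : BoolTriple L :=
  ⟨(x, x, x), isBoolean_diag x⟩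


section MyAux
variable {L : Type*} [Lattice L]

/-- Helper constructor forcing the `BoolTriple` type. -/
def bt (t : L × L × L) (h : IsBoolean t) : BoolTriple L := ⟨t, h⟩

lemma my_isB_A {x y : L} (h : x ≤ y) : IsBoolean ((y, x, x) : L × L × L) := by
  refine ⟨?_, ?_, ?_⟩ <;>
    simp [sup_eq_left.2 h, sup_eq_right.2 h, inf_eq_right.2 h, inf_eq_left.2 h]

lemma my_isB_B {x y : L} (h : x ≤ y) : IsBoolean ((x, y, x) : L × L × L) := by
  refine ⟨?_, ?_, ?_⟩ <;>
    simp [sup_eq_left.2 h, sup_eq_right.2 h, inf_eq_right.2 h, inf_eq_left.2 h]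

lemma my_isB_C {x y : L} (h : x ≤ y) : IsBoolean ((x, x, y) : L × L × L) := by
  refine ⟨?_, ?_, ?_⟩ <;>
    simp [sup_eq_left.2 h, sup_eq_right.2 h, inf_eq_right.2 h, inf_eq_left.2 h]

lemma my_isB_D (x y : L) : IsBoolean ((x, y, x ⊓ y) : L × L × L) := by
  rw [isBoolean_iff_rep]
  exact ⟨x ⊔ y, x, y, (inf_eq_right.2 le_sup_left).symm,
    (inf_eq_right.2 le_sup_right).symm, rfl⟩

variable {o i x : L}

lemma myQ1 (ho : o ≤ x) (hi : x ≤ i) :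
    bt (x,o,o) (my_isB_A ho) ⊔ bt (o,o,i) (my_isB_C (ho.trans hi))
      = bt (x,x,i) (my_isB_C hi) := by
  apply Subtype.ext
  show bClosure ((x,o,o) ⊔ (o,o,i)) = (x,x,i)
  simp [bClosure, Prod.ext_iff, sup_eq_left.2 ho, sup_eq_right.2 ho,
    sup_eq_left.2 (ho.trans hi), sup_eq_right.2 (ho.trans hi),
    sup_eq_left.2 hi, sup_eq_right.2 hi, inf_eq_left.2 hi, inf_eq_right.2 hi]

lemma myQ2 (ho : o ≤ x) (hi : x ≤ i) :
    bt (o,x,o) (my_isB_B ho) ⊔ bt (o,o,i) (my_isB_C (ho.trans hi))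
      = bt (x,x,i) (my_isB_C hi) := by
  apply Subtype.ext
  show bClosure ((o,x,o) ⊔ (o,o,i)) = (x,x,i)
  simp [bClosure, Prod.ext_iff, sup_eq_left.2 ho, sup_eq_right.2 ho,
    sup_eq_left.2 (ho.trans hi), sup_eq_right.2 (ho.trans hi),
    sup_eq_left.2 hi, sup_eq_right.2 hi, inf_eq_left.2 hi, inf_eq_right.2 hi]

lemma myQ3 (ho : o ≤ x) (hi : x ≤ i) :
    bt (o,o,x) (my_isB_C ho) ⊔ bt (o,i,o) (my_isB_B (ho.trans hi))
      = bt (x,i,x) (my_isB_B hi) := by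
  apply Subtype.ext
  show bClosure ((o,o,x) ⊔ (o,i,o)) = (x,i,x)
  simp [bClosure, Prod.ext_iff, sup_eq_left.2 ho, sup_eq_right.2 ho,
    sup_eq_left.2 (ho.trans hi), sup_eq_right.2 (ho.trans hi),
    sup_eq_left.2 hi, sup_eq_right.2 hi, inf_eq_left.2 hi, inf_eq_right.2 hi]

lemma myQ4 (ho : o ≤ x) (hi : x ≤ i) :
    bt (x,x,i) (my_isB_C hi) ⊓ bt (o,i,o) (my_isB_B (ho.trans hi))
      = bt (o,x,o) (my_isB_B ho) := by
  apply Subtype.ext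
  show ((x,x,i) : L×L×L) ⊓ (o,i,o) = (o,x,o)
  simp [Prod.ext_iff, inf_eq_left.2 hi, inf_eq_right.2 ho,
    inf_eq_right.2 (ho.trans hi), inf_eq_left.2 (ho.trans hi)]

lemma myQ5 (ho : o ≤ x) (hi : x ≤ i) :
    bt (x,x,i) (my_isB_C hi) ⊓ bt (i,o,o) (my_isB_A (ho.trans hi))
      = bt (x,o,o) (my_isB_A ho) := by
  apply Subtype.ext
  show ((x,x,i) : L×L×L) ⊓ (i,o,o) = (x,o,o)
  simp [Prod.ext_iff, inf_eq_left.2 hi, inf_eq_right.2 ho,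
    inf_eq_right.2 (ho.trans hi), inf_eq_left.2 (ho.trans hi)]

lemma myQ6 (ho : o ≤ x) (hi : x ≤ i) :
    bt (x,i,x) (my_isB_B hi) ⊓ bt (i,o,o) (my_isB_A (ho.trans hi))
      = bt (x,o,o) (my_isB_A ho) := by
  apply Subtype.ext
  show ((x,i,x) : L×L×L) ⊓ (i,o,o) = (x,o,o)
  simp [Prod.ext_iff, inf_eq_left.2 hi, inf_eq_right.2 ho,
    inf_eq_right.2 (ho.trans hi), inf_eq_left.2 (ho.trans hi)]

lemma myQ7 (ho : o ≤ x) :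
    bt (x,o,o) (my_isB_A ho) ⊔ bt (o,x,o) (my_isB_B ho) = diag x := by
  apply Subtype.ext
  show bClosure ((x,o,o) ⊔ (o,x,o)) = (x,x,x)
  simp [bClosure, Prod.ext_iff, sup_eq_left.2 ho, sup_eq_right.2 ho]

lemma myQ11a {y : L} (ho1 : o ≤ x) (ho2 : o ≤ y) :
    bt (x,o,o) (my_isB_A ho1) ⊔ bt (o,y,o) (my_isB_B ho2)
      = bt (x,y,x ⊓ y) (my_isB_D x y) := by
  apply Subtype.ext
  show bClosure ((x,o,o) ⊔ (o,y,o)) = (x,y,x ⊓ y)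
  simp [bClosure, Prod.ext_iff, sup_eq_left.2 ho1, sup_eq_right.2 ho1,
    sup_eq_left.2 ho2, sup_eq_right.2 ho2]

lemma my_inf_le_third {x y z : L} (ht : IsBoolean ((x, y, z) : L × L × L)) :
    x ⊓ y ≤ z := by
  have h := ht.2.2
  simp only at h
  rw [h]
  exact le_inf (inf_le_left.trans le_sup_right) (inf_le_right.trans le_sup_right)

lemma myQ11b {y z : L} (ht : IsBoolean ((x, y, z) : L × L × L))
    (h1 : o ≤ x) (h2 : o ≤ y) (h3 : o ≤ z) :
    bt (x,y,x ⊓ y) (my_isB_D x y) ⊔ bt (o,o,z) (my_isB_C h3) = bt (x,y,z) ht := by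
  apply le_antisymm
  · apply sup_le
    · show ((x,y,x ⊓ y) : L×L×L) ≤ (x,y,z)
      exact ⟨le_refl x, le_refl y, my_inf_le_third ht⟩
    · show ((o,o,z) : L×L×L) ≤ (x,y,z)
      exact ⟨h1, h2, le_refl z⟩
  · show ((x,y,z) : L×L×L) ≤ bClosure ((x,y,x ⊓ y) ⊔ (o,o,z))
    refine le_trans ?_ (le_bClosure _)
    exact ⟨le_sup_left, le_sup_left, le_sup_right⟩

lemma my_diag_sup (x y : L) : diag x ⊔ diag y = diag (x ⊔ y) := by
  apply Subtype.ext
  show bClosure ((x,x,x) ⊔ (y,y,y)) = (x ⊔ y, x ⊔ y, x ⊔ y)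
  simp [bClosure, Prod.ext_iff]

lemma my_diag_inf (x y : L) : diag x ⊓ diag y = diag (x ⊓ y) :=
  Subtype.ext rfl

end MyAux
section MyKey
variable {L : Type*} [Lattice L] {Φ : BoolTriple L → BoolTriple L → Prop}

lemma my_key_forward (hΦ : IsLatticeCongruence Φ) {a b : BoolTriple L} (h : Φ a b) :
    Φ (diag a.1.1) (diag b.1.1) ∧ Φ (diag a.1.2.1) (diag b.1.2.1) ∧
      Φ (diag a.1.2.2) (diag b.1.2.2) := by
  obtain ⟨⟨hrefl, hsymm, htrans⟩, hcomp⟩ := hΦ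
  set a1 := a.1.1 with ha1
  set a2 := a.1.2.1 with ha2
  set a3 := a.1.2.2 with ha3
  set b1 := b.1.1 with hb1
  set b2 := b.1.2.1 with hb2
  set b3 := b.1.2.2 with hb3
  set o := a1 ⊓ a2 ⊓ a3 ⊓ (b1 ⊓ b2 ⊓ b3) with ho
  set i := a1 ⊔ a2 ⊔ a3 ⊔ (b1 ⊔ b2 ⊔ b3) with hi
  have hoa1 : o ≤ a1 := inf_le_left.trans (inf_le_left.trans inf_le_left)
  have hoa2 : o ≤ a2 := inf_le_left.trans (inf_le_left.trans inf_le_right)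
  have hoa3 : o ≤ a3 := inf_le_left.trans inf_le_right
  have hob1 : o ≤ b1 := inf_le_right.trans (inf_le_left.trans inf_le_left)
  have hob2 : o ≤ b2 := inf_le_right.trans (inf_le_left.trans inf_le_right)
  have hob3 : o ≤ b3 := inf_le_right.trans inf_le_right
  have hia1 : a1 ≤ i := le_trans (le_trans le_sup_left le_sup_left) le_sup_left
  have hia2 : a2 ≤ i := le_trans (le_trans le_sup_right le_sup_left) le_sup_left
  have hia3 : a3 ≤ i := le_trans le_sup_right le_sup_left
  have hib1 : b1 ≤ i := le_trans (le_trans le_sup_left le_sup_left) le_sup_right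
  have hib2 : b2 ≤ i := le_trans (le_trans le_sup_right le_sup_left) le_sup_right
  have hib3 : b3 ≤ i := le_trans le_sup_right le_sup_right
  have hoi : o ≤ i := hoa1.trans hia1
  -- the constants
  set C1 : BoolTriple L := bt (i,o,o) (my_isB_A hoi) with hC1
  set C2 : BoolTriple L := bt (o,i,o) (my_isB_B hoi) with hC2
  set C3 : BoolTriple L := bt (o,o,i) (my_isB_C hoi) with hC3
  -- coordinate extraction
  have h1 : Φ (bt (a1,o,o) (my_isB_A hoa1)) (bt (b1,o,o) (my_isB_A hob1)) := by
    have h' := (hcomp a b C1 C1 h (hrefl C1)).2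
    have e1 : a ⊓ C1 = bt (a1,o,o) (my_isB_A hoa1) := by
      apply Subtype.ext
      show (a1 ⊓ i, a2 ⊓ o, a3 ⊓ o) = (a1, o, o)
      simp [Prod.ext_iff, inf_eq_left.2 hia1, inf_eq_right.2 hoa2, inf_eq_right.2 hoa3]
    have e2 : b ⊓ C1 = bt (b1,o,o) (my_isB_A hob1) := by
      apply Subtype.ext
      show (b1 ⊓ i, b2 ⊓ o, b3 ⊓ o) = (b1, o, o)
      simp [Prod.ext_iff, inf_eq_left.2 hib1, inf_eq_right.2 hob2, inf_eq_right.2 hob3]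
    rwa [e1, e2] at h'
  have h2 : Φ (bt (o,a2,o) (my_isB_B hoa2)) (bt (o,b2,o) (my_isB_B hob2)) := by
    have h' := (hcomp a b C2 C2 h (hrefl C2)).2
    have e1 : a ⊓ C2 = bt (o,a2,o) (my_isB_B hoa2) := by
      apply Subtype.ext
      show (a1 ⊓ o, a2 ⊓ i, a3 ⊓ o) = (o, a2, o)
      simp [Prod.ext_iff, inf_eq_left.2 hia2, inf_eq_right.2 hoa1, inf_eq_right.2 hoa3]
    have e2 : b ⊓ C2 = bt (o,b2,o) (my_isB_B hob2) := by
      apply Subtype.ext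
      show (b1 ⊓ o, b2 ⊓ i, b3 ⊓ o) = (o, b2, o)
      simp [Prod.ext_iff, inf_eq_left.2 hib2, inf_eq_right.2 hob1, inf_eq_right.2 hob3]
    rwa [e1, e2] at h'
  have h3 : Φ (bt (o,o,a3) (my_isB_C hoa3)) (bt (o,o,b3) (my_isB_C hob3)) := by
    have h' := (hcomp a b C3 C3 h (hrefl C3)).2
    have e1 : a ⊓ C3 = bt (o,o,a3) (my_isB_C hoa3) := by
      apply Subtype.ext
      show (a1 ⊓ o, a2 ⊓ o, a3 ⊓ i) = (o, o, a3)
      simp [Prod.ext_iff, inf_eq_left.2 hia3, inf_eq_right.2 hoa1, inf_eq_right.2 hoa2]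
    have e2 : b ⊓ C3 = bt (o,o,b3) (my_isB_C hob3) := by
      apply Subtype.ext
      show (b1 ⊓ o, b2 ⊓ o, b3 ⊓ i) = (o, o, b3)
      simp [Prod.ext_iff, inf_eq_left.2 hib3, inf_eq_right.2 hob1, inf_eq_right.2 hob2]
    rwa [e1, e2] at h'
  -- transfer coordinate 1 → 2
  have t12 : ∀ x y : L, ∀ hox : o ≤ x, ∀ hix : x ≤ i, ∀ hoy : o ≤ y, ∀ hiy : y ≤ i,
      Φ (bt (x,o,o) (my_isB_A hox)) (bt (y,o,o) (my_isB_A hoy)) →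
      Φ (bt (o,x,o) (my_isB_B hox)) (bt (o,y,o) (my_isB_B hoy)) := by
    intro x y hox hix hoy hiy hxy
    have h' := (hcomp _ _ C3 C3 hxy (hrefl C3)).1
    rw [hC3, myQ1 hox hix, myQ1 hoy hiy] at h'
    have h'' := (hcomp _ _ C2 C2 h' (hrefl C2)).2
    rw [hC2, myQ4 hox hix, myQ4 hoy hiy] at h''
    exact h''
  -- transfer coordinate 2 → 1
  have t21 : ∀ x y : L, ∀ hox : o ≤ x, ∀ hix : x ≤ i, ∀ hoy : o ≤ y, ∀ hiy : y ≤ i,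
      Φ (bt (o,x,o) (my_isB_B hox)) (bt (o,y,o) (my_isB_B hoy)) →
      Φ (bt (x,o,o) (my_isB_A hox)) (bt (y,o,o) (my_isB_A hoy)) := by
    intro x y hox hix hoy hiy hxy
    have h' := (hcomp _ _ C3 C3 hxy (hrefl C3)).1
    rw [hC3, myQ2 hox hix, myQ2 hoy hiy] at h'
    have h'' := (hcomp _ _ C1 C1 h' (hrefl C1)).2
    rw [hC1, myQ5 hox hix, myQ5 hoy hiy] at h''
    exact h''
  -- transfer coordinate 3 → 1
  have t31 : ∀ x y : L, ∀ hox : o ≤ x, ∀ hix : x ≤ i, ∀ hoy : o ≤ y, ∀ hiy : y ≤ i,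
      Φ (bt (o,o,x) (my_isB_C hox)) (bt (o,o,y) (my_isB_C hoy)) →
      Φ (bt (x,o,o) (my_isB_A hox)) (bt (y,o,o) (my_isB_A hoy)) := by
    intro x y hox hix hoy hiy hxy
    have h' := (hcomp _ _ C2 C2 hxy (hrefl C2)).1
    rw [hC2, myQ3 hox hix, myQ3 hoy hiy] at h'
    have h'' := (hcomp _ _ C1 C1 h' (hrefl C1)).2
    rw [hC1, myQ6 hox hix, myQ6 hoy hiy] at h''
    exact h''
  -- from the two coordinate forms to the diagonal
  have tod : ∀ x y : L, ∀ hox : o ≤ x, ∀ hoy : o ≤ y,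
      Φ (bt (x,o,o) (my_isB_A hox)) (bt (y,o,o) (my_isB_A hoy)) →
      Φ (bt (o,x,o) (my_isB_B hox)) (bt (o,y,o) (my_isB_B hoy)) →
      Φ (diag x) (diag y) := by
    intro x y hox hoy hA hB
    have h' := (hcomp _ _ _ _ hA hB).1
    rwa [myQ7 hox, myQ7 hoy] at h'
  refine ⟨?_, ?_, ?_⟩
  · exact tod a1 b1 hoa1 hob1 h1 (t12 a1 b1 hoa1 hia1 hob1 hib1 h1)
  · exact tod a2 b2 hoa2 hob2 (t21 a2 b2 hoa2 hia2 hob2 hib2 h2) h2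
  · have h3' := t31 a3 b3 hoa3 hia3 hob3 hib3 h3
    exact tod a3 b3 hoa3 hob3 h3' (t12 a3 b3 hoa3 hia3 hob3 hib3 h3')

end MyKey
section MyKey2
variable {L : Type*} [Lattice L] {Φ : BoolTriple L → BoolTriple L → Prop}

lemma my_key_backward (hΦ : IsLatticeCongruence Φ) {a b : BoolTriple L}
    (hd1 : Φ (diag a.1.1) (diag b.1.1)) (hd2 : Φ (diag a.1.2.1) (diag b.1.2.1))
    (hd3 : Φ (diag a.1.2.2) (diag b.1.2.2)) : Φ a b := by
  obtain ⟨⟨hrefl, hsymm, htrans⟩, hcomp⟩ := hΦ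
  set a1 := a.1.1 with ha1
  set a2 := a.1.2.1 with ha2
  set a3 := a.1.2.2 with ha3
  set b1 := b.1.1 with hb1
  set b2 := b.1.2.1 with hb2
  set b3 := b.1.2.2 with hb3
  set o := a1 ⊓ a2 ⊓ a3 ⊓ (b1 ⊓ b2 ⊓ b3) with ho
  set i := a1 ⊔ a2 ⊔ a3 ⊔ (b1 ⊔ b2 ⊔ b3) with hi
  have hoa1 : o ≤ a1 := inf_le_left.trans (inf_le_left.trans inf_le_left)
  have hoa2 : o ≤ a2 := inf_le_left.trans (inf_le_left.trans inf_le_right)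
  have hoa3 : o ≤ a3 := inf_le_left.trans inf_le_right
  have hob1 : o ≤ b1 := inf_le_right.trans (inf_le_left.trans inf_le_left)
  have hob2 : o ≤ b2 := inf_le_right.trans (inf_le_left.trans inf_le_right)
  have hob3 : o ≤ b3 := inf_le_right.trans inf_le_right
  have hia1 : a1 ≤ i := le_trans (le_trans le_sup_left le_sup_left) le_sup_left
  have hia2 : a2 ≤ i := le_trans (le_trans le_sup_right le_sup_left) le_sup_left
  have hia3 : a3 ≤ i := le_trans le_sup_right le_sup_left
  have hib1 : b1 ≤ i := le_trans (le_trans le_sup_left le_sup_left) le_sup_right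
  have hib2 : b2 ≤ i := le_trans (le_trans le_sup_right le_sup_left) le_sup_right
  have hib3 : b3 ≤ i := le_trans le_sup_right le_sup_right
  have hoi : o ≤ i := hoa1.trans hia1
  set C1 : BoolTriple L := bt (i,o,o) (my_isB_A hoi) with hC1
  set C2 : BoolTriple L := bt (o,i,o) (my_isB_B hoi) with hC2
  set C3 : BoolTriple L := bt (o,o,i) (my_isB_C hoi) with hC3
  -- embed the diagonal facts into coordinates
  have g1 : Φ (bt (a1,o,o) (my_isB_A hoa1)) (bt (b1,o,o) (my_isB_A hob1)) := by
    have h' := (hcomp _ _ C1 C1 hd1 (hrefl C1)).2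
    have e1 : diag a1 ⊓ C1 = bt (a1,o,o) (my_isB_A hoa1) := by
      apply Subtype.ext
      show (a1 ⊓ i, a1 ⊓ o, a1 ⊓ o) = (a1, o, o)
      simp [Prod.ext_iff, inf_eq_left.2 hia1, inf_eq_right.2 hoa1]
    have e2 : diag b1 ⊓ C1 = bt (b1,o,o) (my_isB_A hob1) := by
      apply Subtype.ext
      show (b1 ⊓ i, b1 ⊓ o, b1 ⊓ o) = (b1, o, o)
      simp [Prod.ext_iff, inf_eq_left.2 hib1, inf_eq_right.2 hob1]
    rwa [e1, e2] at h'
  have g2 : Φ (bt (o,a2,o) (my_isB_B hoa2)) (bt (o,b2,o) (my_isB_B hob2)) := by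
    have h' := (hcomp _ _ C2 C2 hd2 (hrefl C2)).2
    have e1 : diag a2 ⊓ C2 = bt (o,a2,o) (my_isB_B hoa2) := by
      apply Subtype.ext
      show (a2 ⊓ o, a2 ⊓ i, a2 ⊓ o) = (o, a2, o)
      simp [Prod.ext_iff, inf_eq_left.2 hia2, inf_eq_right.2 hoa2]
    have e2 : diag b2 ⊓ C2 = bt (o,b2,o) (my_isB_B hob2) := by
      apply Subtype.ext
      show (b2 ⊓ o, b2 ⊓ i, b2 ⊓ o) = (o, b2, o)
      simp [Prod.ext_iff, inf_eq_left.2 hib2, inf_eq_right.2 hob2]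
    rwa [e1, e2] at h'
  have g3 : Φ (bt (o,o,a3) (my_isB_C hoa3)) (bt (o,o,b3) (my_isB_C hob3)) := by
    have h' := (hcomp _ _ C3 C3 hd3 (hrefl C3)).2
    have e1 : diag a3 ⊓ C3 = bt (o,o,a3) (my_isB_C hoa3) := by
      apply Subtype.ext
      show (a3 ⊓ o, a3 ⊓ o, a3 ⊓ i) = (o, o, a3)
      simp [Prod.ext_iff, inf_eq_left.2 hia3, inf_eq_right.2 hoa3]
    have e2 : diag b3 ⊓ C3 = bt (o,o,b3) (my_isB_C hob3) := by
      apply Subtype.ext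
      show (b3 ⊓ o, b3 ⊓ o, b3 ⊓ i) = (o, o, b3)
      simp [Prod.ext_iff, inf_eq_left.2 hib3, inf_eq_right.2 hob3]
    rwa [e1, e2] at h'
  -- reassemble
  have g12 := (hcomp _ _ _ _ g1 g2).1
  rw [myQ11a hoa1 hoa2, myQ11a hob1 hob2] at g12
  have g123 := (hcomp _ _ _ _ g12 g3).1
  have haB : IsBoolean ((a1, a2, a3) : L × L × L) := a.2
  have hbB : IsBoolean ((b1, b2, b3) : L × L × L) := b.2
  rw [myQ11b haB hoa1 hoa2 hoa3, myQ11b hbB hob1 hob2 hob3] at g123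
  have ea : a = bt (a1, a2, a3) haB := rfl
  have eb : b = bt (b1, b2, b3) hbB := rfl
  rw [ea, eb]
  exact g123

end MyKey2
/-- Every congruence `Φ` of the lattice `M̂(L)` of Boolean triples is of the form
`Θ̂` for a unique congruence `Θ` of `L`, namely the restriction of `Φ` to the
diagonal: `Φ` holds between two Boolean triples iff `Θ` holds componentwise. -/
theorem congruence_of_boolTriple_eq_hat {L : Type*} [Lattice L]
    (Φ : BoolTriple L → BoolTriple L → Prop) (hΦ : IsLatticeCongruence Φ) :
    (∀ a b : BoolTriple L,
      Φ a b ↔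
        (Φ (diag a.1.1) (diag b.1.1) ∧ Φ (diag a.1.2.1) (diag b.1.2.1) ∧
          Φ (diag a.1.2.2) (diag b.1.2.2))) ∧
    ∃! Θ : L → L → Prop, IsLatticeCongruence Θ ∧
      ∀ a b : BoolTriple L,
        Φ a b ↔ (Θ a.1.1 b.1.1 ∧ Θ a.1.2.1 b.1.2.1 ∧ Θ a.1.2.2 b.1.2.2) := by
  have key : ∀ a b : BoolTriple L,
      Φ a b ↔
        (Φ (diag a.1.1) (diag b.1.1) ∧ Φ (diag a.1.2.1) (diag b.1.2.1) ∧
          Φ (diag a.1.2.2) (diag b.1.2.2)) := by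
    intro a b
    exact ⟨fun h => my_key_forward hΦ h,
      fun h => my_key_backward hΦ h.1 h.2.1 h.2.2⟩
  refine ⟨key, ⟨fun x y => Φ (diag x) (diag y), ⟨⟨?_, ?_⟩, ?_⟩, ?_⟩⟩
  · exact ⟨fun x => hΦ.1.refl _, fun h => hΦ.1.symm h, fun h h' => hΦ.1.trans h h'⟩
  · intro p q r s h1 h2
    constructor
    · have := (hΦ.2 _ _ _ _ h1 h2).1
      rwa [my_diag_sup, my_diag_sup] at this
    · have := (hΦ.2 _ _ _ _ h1 h2).2
      rwa [my_diag_inf, my_diag_inf] at this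
  · exact key
  · rintro Θ' ⟨hc, hiff⟩
    funext x y
    apply propext
    constructor
    · intro h
      exact (hiff (diag x) (diag y)).2 ⟨h, h, h⟩
    · intro h
      exact ((hiff (diag x) (diag y)).1 h).1
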